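/- Let λ, μ be real numbers with λ > 1 and 0 ≤ μ < 1 (or symmetrically 0 ≤ λ < 1 and μ > 1). Then there exists W such that for every integer w ≥ W, the polynomial D_w(p) = (1 − λ²p²)(1 − μ²p²) − (λ² − p²)(μ² − p²)p^{2w} has exactly 2w roots (counted with multiplicity) on the unit circle |p| = 1, and exactly 4 roots with |p| ≠ 1, all of which are real. -/

import Mathlib

open Polynomial

/-- The denominator polynomial `D_w(p) = (1 − λ²p²)(1 − μ²p²) − (λ² − p²)(μ² − p²)p^{2w}`,
viewed as a polynomial over `ℂ` with real parameters `λ, μ`. -/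
noncomputable def Dpoly (lam mu : ℝ) (w : ℕ) : Polynomial ℂ :=
  (1 - C ((lam : ℂ) ^ 2) * X ^ 2) * (1 - C ((mu : ℂ) ^ 2) * X ^ 2) -
    (C ((lam : ℂ) ^ 2) - X ^ 2) * (C ((mu : ℂ) ^ 2) - X ^ 2) * X ^ (2 * w)

namespace DpolyAux

open Real

lemma key_id (L M c s cw sw i : ℂ) (h3 : c^2+s^2 = 1) (h4 : cw^2+sw^2 = 1) (h5 : i^2 = -1) :
    (1-L*(c+s*i)^2)*(1-M*(c+s*i)^2) - (L-(c+s*i)^2)*(M-(c+s*i)^2)*((cw+sw*i)^2)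
    = 2*i*(cw+sw*i)*(c+s*i)^2*(cw*(-((1-L)*(1+M)+(1+L)*(1-M))*s*c) - sw*((1-L)*(1-M)*c^2 - (1+L)*(1+M)*s^2)) := by
  linear_combination ((-1)*sw^2 + (-1)*cw^2 + (-1)*s^2*sw^2 + (-1)*s^2*cw^2 + (-1)*c^2*sw^2 + (-1)*c^2*cw^2 + 1*M + (-1)*M*sw^2 + (-1)*M*cw^2 + (-2)*M*s^2*sw^2 + 2*M*s^2*cw*sw*i + 4*M*c*s*sw^2*i + 4*M*c*s*cw*sw + 2*M*c^2*sw^2 + (-2)*M*c^2*cw*sw*i + 1*L + (-1)*L*sw^2 + (-1)*L*cw^2 + (-2)*L*s^2*sw^2 + 2*L*s^2*cw*sw*i + 4*L*c*s*sw^2*i + 4*L*c*s*cw*sw + 2*L*c^2*sw^2 + (-2)*L*c^2*cw*sw*i + 1*L*M + (-2)*L*M*sw^2 + 2*L*M*cw*sw*i + 1*L*M*s^2 + (-2)*L*M*s^2*sw^2 + 2*L*M*s^2*cw*sw*i + (-4)*L*M*c*s*i + 4*L*M*c*s*sw^2*i + 4*L*M*c*s*cw^2*i + (-7)*L*M*c^2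 + 6*L*M*c^2*sw^2 + 2*L*M*c^2*cw*sw*i + 8*L*M*c^2*cw^2)*h3 + ((-1) + (-1)*M + 2*M*c*s*i + 2*M*c^2 + (-1)*L + 2*L*c*s*i + 2*L*c^2 + (-1)*L*M + 4*L*M*c*s*i + 8*L*M*c^2 + (-8)*L*M*c^3*s*i + (-8)*L*M*c^4)*h4 + (1*s^4*sw^2 + (-1)*s^4*sw^2*i^2 + (-1)*s^4*sw^2*i^4 + (-2)*s^4*cw*sw*i^3 + 1*s^4*cw^2 + (-1)*s^4*cw^2*i^2 + (-4)*c*s^3*sw^2*i^3 + (-4)*c*s^3*cw*sw*i^2 + 2*c^2*s^2*sw^2 + (-4)*c^2*s^2*sw^2*i^2 + (-2)*c^2*s^2*cw*sw*i + 2*c^2*s^2*cw^2 + 1*c^4*sw^2 + (-1)*M*s^2 + (-1)*M*s^2*sw^2 + 1*M*s^2*sw^2*i^2 + 2*M*s^2*cw*sw*i + 1*M*s^2*cw^2 + 2*M*s^4*sw^2 + (-2)*M*s^4*sw^2*i^2 + (-2)*M*s^4*cw*sw*i + 2*M*c*s*sw^2*i + 4*M*c*s*cw*sw + (-4)*M*c*s^3*sw^2*i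 + (-4)*M*c*s^3*cw*sw + 1*M*c^2*sw^2 + (-2)*M*c^2*s^2*sw^2*i^2 + (-2)*M*c^2*s^2*cw*sw*i + (-4)*M*c^3*s*sw^2*i + (-4)*M*c^3*s*cw*sw + (-2)*M*c^4*sw^2 + (-1)*L*s^2 + (-1)*L*s^2*sw^2 + 1*L*s^2*sw^2*i^2 + 2*L*s^2*cw*sw*i + 1*L*s^2*cw^2 + 2*L*s^4*sw^2 + (-2)*L*s^4*sw^2*i^2 + (-2)*L*s^4*cw*sw*i + 2*L*c*s*sw^2*i + 4*L*c*s*cw*sw + (-4)*L*c*s^3*sw^2*i + (-4)*L*c*s^3*cw*sw + 1*L*c^2*sw^2 + (-2)*L*c^2*s^2*sw^2*i^2 + (-2)*L*c^2*s^2*cw*sw*i + (-4)*L*c^3*s*sw^2*i + (-4)*L*c^3*s*cw*sw + (-2)*L*c^4*sw^2 + (-1)*L*M*sw^2 + (-1)*L*M*s^4 + 1*L*M*s^4*i^2 + 2*L*M*s^4*sw^2 + (-2)*L*M*s^4*sw^2*i^2 + (-2)*L*M*s^4*cw*sw*i + 4*L*M*c*s^3*i + (-4)*L*M*c*s^3*sw^2*i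 + (-4)*L*M*c*s^3*cw*sw*i^2 + (-4)*L*M*c*s^3*cw^2*i + 6*L*M*c^2*s^2 + (-4)*L*M*c^2*s^2*sw^2 + 2*L*M*c^2*s^2*sw^2*i^2 + (-6)*L*M*c^2*s^2*cw*sw*i + (-8)*L*M*c^2*s^2*cw^2 + 4*L*M*c^3*s*sw^2*i + 2*L*M*c^4*sw^2)*h5

noncomputable def prf (l m θ : ℝ) : ℝ :=
  (1-l^2)*(1-m^2)*Real.cos θ^2 - (1+l^2)*(1+m^2)*Real.sin θ^2
noncomputable def pif (l m θ : ℝ) : ℝ :=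
  -((1-l^2)*(1+m^2)+(1+l^2)*(1-m^2))*Real.sin θ*Real.cos θ
noncomputable def ff (l m : ℝ) (w : ℕ) (θ : ℝ) : ℝ :=
  Real.cos (w*θ) * pif l m θ - Real.sin (w*θ) * prf l m θ

noncomputable def thet (w : ℕ) (k : ℕ) : ℝ := (π/2 + k*π)/w

lemma ff_cont (l m : ℝ) (w : ℕ) : Continuous (ff l m w) := by
  unfold ff pif prf; fun_prop

lemma eval_Dpoly (l m : ℝ) (w : ℕ) (p : ℂ) :
    (Dpoly l m w).eval p
      = (1-(l:ℂ)^2*p^2)*(1-(m:ℂ)^2*p^2) - ((l:ℂ)^2-p^2)*((m:ℂ)^2-p^2)*p^(2*w) := by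
  simp [Dpoly]

lemma eval_circle (l m : ℝ) (w : ℕ) (θ : ℝ) :
    (Dpoly l m w).eval (Complex.exp (θ*Complex.I))
      = 2*Complex.I*(Complex.exp (θ*Complex.I))^(w+2) * ((ff l m w θ : ℝ) : ℂ) := by
  have hq : Complex.exp (θ*Complex.I) = ↑(Real.cos θ) + ↑(Real.sin θ)*Complex.I := by
    rw [Complex.exp_mul_I, Complex.ofReal_cos, Complex.ofReal_sin]
  have hQ : Complex.exp (θ*Complex.I)^w
      = ↑(Real.cos (w*θ)) + ↑(Real.sin (w*θ))*Complex.I := by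
    rw [← Complex.exp_nat_mul, show (w:ℂ) * (↑θ*Complex.I) = ↑((w:ℝ)*θ)*Complex.I by push_cast; ring,
      Complex.exp_mul_I, Complex.ofReal_cos, Complex.ofReal_sin]
  have h3 : ((Real.cos θ : ℂ))^2 + ((Real.sin θ : ℂ))^2 = 1 := by
    norm_cast; exact Real.cos_sq_add_sin_sq θ
  have h4 : ((Real.cos ((w:ℝ)*θ) : ℂ))^2 + ((Real.sin ((w:ℝ)*θ) : ℂ))^2 = 1 := by
    norm_cast; exact Real.cos_sq_add_sin_sq _
  have hkey := key_id ((l:ℂ)^2) ((m:ℂ)^2) _ _ _ _ _ h3 h4 Complex.I_sq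
  rw [eval_Dpoly, pow_mul', pow_add, hQ, hq]
  simp only [ff, pif, prf, Complex.ofReal_sub, Complex.ofReal_mul, Complex.ofReal_add,
    Complex.ofReal_neg, Complex.ofReal_pow, Complex.ofReal_one]
  linear_combination hkey

lemma prf_neg {l m : ℝ} (hl : 1 < l) (hm0 : 0 ≤ m) (hm : m < 1) (θ : ℝ) :
    prf l m θ < 0 := by
  have ha : (1-l^2)*(1-m^2) < 0 := by
    have : 1 < l^2 := by nlinarith
    have : m^2 < 1 := by nlinarith
    have h1 : 1 - l^2 < 0 := by linarith
    have h2 : 0 < 1 - m^2 := by linarith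
    exact mul_neg_of_neg_of_pos h1 h2
  have hb : (0:ℝ) < (1+l^2)*(1+m^2) := by positivity
  have h3 := Real.sin_sq_add_cos_sq θ
  have hc := sq_nonneg (Real.cos θ)
  have hs := sq_nonneg (Real.sin θ)
  unfold prf
  rcases le_or_gt (1/2) (Real.sin θ^2) with h|h
  · nlinarith
  · have hc2 : (1:ℝ)/2 < Real.cos θ^2 := by linarith
    nlinarith

lemma ff_sign {l m : ℝ} {w : ℕ} (hl : 1 < l) (hm0 : 0 ≤ m) (hm : m < 1)
    (hw : 1 ≤ w) (k : ℕ) : 0 < (-1:ℝ)^k * ff l m w (thet w k) := by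
  have hw' : (w:ℝ) ≠ 0 := by positivity
  have harg : (w:ℝ) * thet w k = π/2 + k*π := by
    unfold thet; field_simp
  have hcos : Real.cos ((w:ℝ) * thet w k) = 0 := by
    rw [harg, Real.cos_add_nat_mul_pi, Real.cos_pi_div_two, mul_zero]
  have hsin : Real.sin ((w:ℝ) * thet w k) = (-1)^k := by
    rw [harg, Real.sin_add_nat_mul_pi, Real.sin_pi_div_two, mul_one]
  have hp := prf_neg hl hm0 hm (thet w k)
  unfold ff
  rw [hcos, hsin]
  have hkk : (-1:ℝ)^k * ((-1:ℝ)^k) = 1 := by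
    rw [← pow_add]; exact (Even.add_self k).neg_one_pow
  nlinarith [hkk, hp]

lemma exists_zero_Ioo {f : ℝ → ℝ} (hf : Continuous f) {a b : ℝ} (hab : a < b)
    (h : f a * f b < 0) : ∃ x ∈ Set.Ioo a b, f x = 0 := by
  rcases lt_trichotomy (f a) 0 with ha | ha | ha
  · have hb : 0 < f b := by nlinarith
    obtain ⟨x, hx, hfx⟩ :=
      intermediate_value_Ioo hab.le hf.continuousOn (Set.mem_Ioo.mpr ⟨ha, hb⟩)
    exact ⟨x, hx, hfx⟩
  · rw [ha, zero_mul] at h; exact absurd h (lt_irrefl 0)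
  · have hb : f b < 0 := by nlinarith
    obtain ⟨x, hx, hfx⟩ :=
      intermediate_value_Ioo' hab.le hf.continuousOn (Set.mem_Ioo.mpr ⟨hb, ha⟩)
    exact ⟨x, hx, hfx⟩

lemma thet_pos {w : ℕ} (hw : 1 ≤ w) (k : ℕ) : 0 < thet w k := by
  have hwr : (0:ℝ) < w := by positivity
  have := Real.pi_pos
  have hk : (0:ℝ) ≤ k := Nat.cast_nonneg k
  unfold thet
  positivity

lemma thet_mono {w : ℕ} (hw : 1 ≤ w) {k k' : ℕ} (h : k < k') : thet w k < thet w k' := by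
  have hwr : (0:ℝ) < w := by positivity
  have := Real.pi_pos
  have hk : (k:ℝ) < k' := by exact_mod_cast h
  unfold thet
  gcongr

lemma thet_lt_pi {w : ℕ} (hw : 1 ≤ w) {k : ℕ} (hk : k < w) : thet w k < π := by
  have hwr : (0:ℝ) < w := by positivity
  have := Real.pi_pos
  have hk' : (k:ℝ) + 1 ≤ w := by exact_mod_cast hk
  unfold thet
  rw [div_lt_iff₀ hwr]
  nlinarith

lemma exists_zeros {l m : ℝ} {w : ℕ} (hl : 1 < l) (hm0 : 0 ≤ m) (hm : m < 1)
    (hw : 1 ≤ w) :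
    ∃ x : ℕ → ℝ, x 0 = 0 ∧ StrictMono x ∧ (∀ k, ff l m w (x k) = 0) ∧
      ∀ k < w, x k < π := by
  have hzero : ∀ k : ℕ, ∃ y ∈ Set.Ioo (thet w k) (thet w (k+1)), ff l m w y = 0 := by
    intro k
    apply exists_zero_Ioo (ff_cont l m w) (thet_mono hw (Nat.lt_succ_self k))
    have s1 := ff_sign hl hm0 hm hw k
    have s2 := ff_sign hl hm0 hm hw (k+1)
    have hkk : (-1:ℝ)^k * (-1:ℝ)^(k+1) = -1 := by
      rw [← pow_add]; exact Odd.neg_one_pow ⟨k, by ring⟩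
    nlinarith [mul_pos s1 s2, hkk]
  choose y hy1 hy2 using hzero
  refine ⟨fun k => Nat.casesOn k 0 y, rfl, ?_, ?_, ?_⟩
  · apply strictMono_nat_of_lt_succ
    intro k
    cases k with
    | zero => exact lt_trans (thet_pos hw 0) (hy1 0).1
    | succ k => exact lt_trans ((hy1 k).2) ((hy1 (k+1)).1)
  · intro k
    cases k with
    | zero => unfold ff pif; simp
    | succ k => exact hy2 k
  · intro k hk
    cases k with
    | zero => exact Real.pi_pos
    | succ k => exact lt_trans (hy1 k).2 (thet_lt_pi hw hk)

lemma exp_inj_Ico {a b : ℝ} (ha : a ∈ Set.Ico 0 (2*π)) (hb : b ∈ Set.Ico 0 (2*π))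
    (h : Complex.exp (a*Complex.I) = Complex.exp (b*Complex.I)) : a = b := by
  have h1 : Complex.exp ((↑(a-b))*Complex.I) = 1 := by
    push_cast
    rw [sub_mul, Complex.exp_sub, h, div_self (Complex.exp_ne_zero _)]
  rw [Complex.exp_eq_one_iff] at h1
  obtain ⟨n, hn⟩ := h1
  have h2 : ((a-b : ℝ):ℂ) = (n:ℂ)*(2*(π:ℝ)) := by
    apply mul_right_cancel₀ Complex.I_ne_zero
    push_cast at hn ⊢
    linear_combination hn
  have h3 : a - b = n*(2*π) := by exact_mod_cast h2
  have := Real.pi_pos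
  have hn0 : n = 0 := by
    have hna : (n:ℝ) < 1 := by nlinarith [ha.1, ha.2, hb.1, hb.2]
    have hnb : (-1:ℝ) < n := by nlinarith [ha.1, ha.2, hb.1, hb.2]
    have : -1 < n ∧ n < 1 := ⟨by exact_mod_cast hnb, by exact_mod_cast hna⟩
    omega
  rw [hn0] at h3; push_cast at h3; linarith

noncomputable def gg (l m : ℝ) (w : ℕ) (x : ℝ) : ℝ :=
  (1-l^2*x^2)*(1-m^2*x^2) - (l^2-x^2)*(m^2-x^2)*x^(2*w)

lemma eval_Dpoly_real (l m : ℝ) (w : ℕ) (x : ℝ) :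
    (Dpoly l m w).eval (x:ℂ) = ((gg l m w x : ℝ) : ℂ) := by
  rw [eval_Dpoly]; unfold gg; push_cast; ring

lemma eval_Dpoly_neg (l m : ℝ) (w : ℕ) (p : ℂ) :
    (Dpoly l m w).eval (-p) = (Dpoly l m w).eval p := by
  have h2w : (-p)^(2*w) = p^(2*w) := by rw [pow_mul, pow_mul, neg_sq]
  rw [eval_Dpoly, eval_Dpoly, h2w, neg_sq]

lemma eval_Dpoly_inv (l m : ℝ) (w : ℕ) {p : ℂ} (hp : p ≠ 0)
    (h : (Dpoly l m w).eval p = 0) : (Dpoly l m w).eval p⁻¹ = 0 := by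
  have hu : p^2 ≠ 0 := pow_ne_zero _ hp
  have hs : (p^2)^w ≠ 0 := pow_ne_zero _ hu
  have key : (Dpoly l m w).eval p⁻¹ * ((p^2)^w * (p^2)^2)
      = -((1-(l:ℂ)^2*p^2)*(1-(m:ℂ)^2*p^2) - ((l:ℂ)^2-p^2)*((m:ℂ)^2-p^2)*(p^2)^w) := by
    rw [eval_Dpoly, inv_pow, inv_pow, pow_mul]
    field_simp
    ring
  rw [eval_Dpoly, pow_mul] at h
  rw [h, neg_zero] at key
  exact (mul_eq_zero.mp key).resolve_right (mul_ne_zero hs (pow_ne_zero _ hu))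

lemma exists_offroot {l m : ℝ} (hl : 1 < l) (hm0 : 0 ≤ m) (hm : m < 1) :
    ∃ W0 : ℕ, 1 ≤ W0 ∧ ∀ w : ℕ, W0 ≤ w → ∃ x : ℝ, 0 < x ∧ x < 1 ∧ gg l m w x = 0 := by
  have hl0 : 0 < l := lt_trans one_pos hl
  set t : ℝ := (1/l + 1)/2 with ht_def
  have hinv : 1/l < 1 := by rw [div_lt_one hl0]; exact hl
  have hinv0 : 0 < 1/l := by positivity
  have ht0 : 0 < t := by rw [ht_def]; linarith
  have htl : 1/l < t := by rw [ht_def]; linarith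
  have ht1 : t < 1 := by rw [ht_def]; linarith
  have hlt : 1 < l*t := by
    rw [div_lt_iff₀ hl0] at htl
    nlinarith
  have hmt : m*t < 1 := by nlinarith
  set c : ℝ := (l^2*t^2-1)*(1-m^2*t^2) with hc_def
  have hc : 0 < c := by
    apply mul_pos
    · nlinarith
    · nlinarith [mul_nonneg hm0 ht0.le]
  set M : ℝ := (l^2+t^2)*(m^2+t^2)+1 with hM_def
  have hM : 0 < M := by positivity
  obtain ⟨n, hn⟩ := exists_pow_lt_of_lt_one (show (0:ℝ) < c/M by positivity) ht1
  refine ⟨n+1, Nat.le_add_left 1 n, ?_⟩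
  intro w hw
  have hg0 : gg l m w 0 = 1 := by
    unfold gg
    rw [zero_pow (by omega : 2*w ≠ 0)]
    ring
  have hgt : gg l m w t < 0 := by
    have h1 : t^(2*w) ≤ t^n :=
      pow_le_pow_of_le_one ht0.le ht1.le (by omega)
    have h3 : 0 < t^(2*w) := by positivity
    have hbound : -((l^2+t^2)*(m^2+t^2)) ≤ (l^2-t^2)*(m^2-t^2) := by
      nlinarith [sq_nonneg (l*m), sq_nonneg (t*t)]
    have hA : -((M-1)*t^(2*w)) ≤ ((l^2-t^2)*(m^2-t^2))*t^(2*w) := by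
      have := mul_le_mul_of_nonneg_right hbound h3.le
      have hM1 : (l^2+t^2)*(m^2+t^2) = M - 1 := by rw [hM_def]; ring
      rw [hM1] at this
      linarith
    have h6 : M*t^(2*w) < c := by
      have h10 : t^n * M < c := (lt_div_iff₀ hM).mp hn
      have h11 : M * t^(2*w) ≤ M * t^n := mul_le_mul_of_nonneg_left h1 hM.le
      nlinarith [h10, h11]
    have e1 : gg l m w t = -c - ((l^2-t^2)*(m^2-t^2))*t^(2*w) := by
      unfold gg; rw [hc_def]; ring
    linarith
  have hcont : Continuous (gg l m w) := by unfold gg; fun_prop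
  obtain ⟨x, hx, hgx⟩ := exists_zero_Ioo hcont ht0
    (by nlinarith : gg l m w 0 * gg l m w t < 0)
  exact ⟨x, hx.1, lt_trans hx.2 ht1, hgx⟩

lemma Dpoly_natDegree (l m : ℝ) {w : ℕ} (hw : 1 ≤ w) :
    (Dpoly l m w).natDegree = 2*w+4 := by
  have hrw : Dpoly l m w
      = (1 - C ((l:ℂ)^2)*X^2)*(1 - C ((m:ℂ)^2)*X^2)
        - ((X^2 - C ((l:ℂ)^2))*(X^2 - C ((m:ℂ)^2))*X^(2*w)) := by
    unfold Dpoly; ring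
  have hm1 : ((X^2 - C ((l:ℂ)^2)) : Polynomial ℂ).Monic :=
    monic_X_pow_sub_C _ two_ne_zero
  have hm2 : ((X^2 - C ((m:ℂ)^2)) : Polynomial ℂ).Monic :=
    monic_X_pow_sub_C _ two_ne_zero
  have hBmon : (((X^2 - C ((l:ℂ)^2))*(X^2 - C ((m:ℂ)^2))*X^(2*w)) : Polynomial ℂ).Monic :=
    (hm1.mul hm2).mul (monic_X_pow _)
  have hBdeg : (((X^2 - C ((l:ℂ)^2))*(X^2 - C ((m:ℂ)^2))*X^(2*w)) : Polynomial ℂ).natDegree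
      = 2*w+4 := by
    rw [(hm1.mul hm2).natDegree_mul (monic_X_pow _), hm1.natDegree_mul hm2,
      natDegree_X_pow_sub_C, natDegree_X_pow_sub_C, natDegree_X_pow]
    ring
  have hAdeg : ((1 - C ((l:ℂ)^2)*X^2)*(1 - C ((m:ℂ)^2)*X^2) : Polynomial ℂ).natDegree ≤ 4 := by
    compute_degree
  have hlt4 : ((1 - C ((l:ℂ)^2)*X^2)*(1 - C ((m:ℂ)^2)*X^2) : Polynomial ℂ).natDegree
      < (((X^2 - C ((l:ℂ)^2))*(X^2 - C ((m:ℂ)^2))*X^(2*w)) : Polynomial ℂ).natDegree := by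
    rw [hBdeg]; omega
  rw [hrw, natDegree_sub_eq_right_of_natDegree_lt hlt4, hBdeg]

lemma Dpoly_ne_zero (l m : ℝ) {w : ℕ} (hw : 1 ≤ w) : Dpoly l m w ≠ 0 := by
  intro h
  have := Dpoly_natDegree l m hw
  rw [h] at this
  simp at this

lemma Dpoly_roots_card (l m : ℝ) {w : ℕ} (hw : 1 ≤ w) :
    Multiset.card (Dpoly l m w).roots = 2*w+4 := by
  rw [← Dpoly_natDegree l m hw]
  exact (Polynomial.splits_iff_card_roots).mp (IsAlgClosed.splits _)


open scoped Classical in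
lemma main_case {l m : ℝ} (hl : 1 < l) (hm0 : 0 ≤ m) (hm : m < 1) :
    ∃ W : ℕ, ∀ w : ℕ, W ≤ w →
      ((Dpoly l m w).roots.filter (fun p => ‖p‖ = 1)).card = 2 * w ∧
      ((Dpoly l m w).roots.filter (fun p => ‖p‖ ≠ 1)).card = 4 ∧
      ∀ p ∈ (Dpoly l m w).roots, ‖p‖ ≠ 1 → p.im = 0 := by
  obtain ⟨W0, hW01, hoff⟩ := exists_offroot hl hm0 hm
  refine ⟨W0, fun w hw => ?_⟩
  have hw1 : 1 ≤ w := le_trans hW01 hw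
  have hD0 : Dpoly l m w ≠ 0 := Dpoly_ne_zero l m hw1
  have hcard : Multiset.card (Dpoly l m w).roots = 2*w+4 := Dpoly_roots_card l m hw1
  have hpi := Real.pi_pos
  -- circle roots
  obtain ⟨x, hx0, hxmono, hxzero, hxlt⟩ := exists_zeros hl hm0 hm hw1
  have hxnn : ∀ k, 0 ≤ x k := fun k => hx0 ▸ hxmono.monotone (Nat.zero_le k)
  set A : ℕ → ℝ := fun k => if k < w then x k else x (k-w) + Real.pi with hA_def
  have hAmem : ∀ k < 2*w, A k ∈ Set.Ico 0 (2*Real.pi) := by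
    intro k hk
    by_cases h : k < w
    · simp only [hA_def, if_pos h]
      exact ⟨hxnn k, by linarith [hxlt k h]⟩
    · simp only [hA_def, if_neg h]
      have hkw : k - w < w := by omega
      exact ⟨by linarith [hxnn (k-w)], by linarith [hxlt (k-w) hkw]⟩
  have hAmono : ∀ j k, j < k → k < 2*w → A j < A k := by
    intro j k hjk hk
    by_cases hjw : j < w
    · by_cases hkw : k < w
      · simp only [hA_def, if_pos hjw, if_pos hkw]; exact hxmono hjk
      · simp only [hA_def, if_pos hjw, if_neg hkw]
        have h1 : x j < Real.pi := hxlt j hjw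
        linarith [hxnn (k-w)]
    · have hkw : ¬ k < w := by omega
      simp only [hA_def, if_neg hjw, if_neg hkw]
      have h2 : j - w < k - w := by omega
      linarith [hxmono h2]
  have hAroot : ∀ k, (Dpoly l m w).eval (Complex.exp (A k * Complex.I)) = 0 := by
    intro k
    by_cases h : k < w
    · simp only [hA_def, if_pos h]
      rw [eval_circle, hxzero k]
      simp
    · simp only [hA_def, if_neg h]
      have hsplit : Complex.exp (↑(x (k-w) + Real.pi) * Complex.I)
          = -Complex.exp (↑(x (k-w)) * Complex.I) := by
        push_cast
        rw [add_mul, Complex.exp_add, Complex.exp_pi_mul_I]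
        ring
      rw [hsplit, eval_Dpoly_neg, eval_circle, hxzero (k-w)]
      simp
  set Ton : Finset ℂ :=
    (Finset.range (2*w)).image (fun k => Complex.exp (A k * Complex.I)) with hTon
  have hTonCard : Ton.card = 2*w := by
    rw [hTon, Finset.card_image_of_injOn, Finset.card_range]
    intro j hj k hk hjk
    simp only [Finset.coe_range, Set.mem_Iio] at hj hk
    by_contra hne
    rcases lt_or_gt_of_ne hne with h | h
    · exact absurd (exp_inj_Ico (hAmem j hj) (hAmem k hk) hjk)
        (ne_of_lt (hAmono j k h hk))
    · exact absurd (exp_inj_Ico (hAmem j hj) (hAmem k hk) hjk).symm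
        (ne_of_lt (hAmono k j h hj))
  have hTonSub : Ton ⊆ ((Dpoly l m w).roots.filter (fun p => ‖p‖ = 1)).toFinset := by
    intro p hp
    rw [hTon, Finset.mem_image] at hp
    obtain ⟨k, hk, rfl⟩ := hp
    rw [Multiset.mem_toFinset, Multiset.mem_filter]
    exact ⟨Polynomial.mem_roots'.mpr ⟨hD0, hAroot k⟩, Complex.norm_exp_ofReal_mul_I _⟩
  have hon_ge : 2*w ≤ ((Dpoly l m w).roots.filter (fun p => ‖p‖ = 1)).card := by
    calc 2*w = Ton.card := hTonCard.symm
    _ ≤ ((Dpoly l m w).roots.filter (fun p => ‖p‖ = 1)).toFinset.card :=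
        Finset.card_le_card hTonSub
    _ ≤ _ := Multiset.toFinset_card_le _
  -- off circle roots
  obtain ⟨x₁, hx₁0, hx₁1, hgx₁⟩ := hoff w hw
  have hx₁ne : x₁ ≠ 0 := ne_of_gt hx₁0
  have hy3 : 1 < x₁⁻¹ := by
    nlinarith [mul_inv_cancel₀ hx₁ne, inv_nonneg.mpr hx₁0.le]
  have er1 : (Dpoly l m w).eval ((x₁:ℝ):ℂ) = 0 := by
    rw [eval_Dpoly_real l m w x₁, hgx₁, Complex.ofReal_zero]
  have hq1ne : ((x₁:ℝ):ℂ) ≠ 0 := by exact_mod_cast hx₁ne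
  have er2 : (Dpoly l m w).eval ((-x₁:ℝ):ℂ) = 0 := by
    rw [Complex.ofReal_neg, eval_Dpoly_neg]; exact er1
  have er3 : (Dpoly l m w).eval ((x₁⁻¹:ℝ):ℂ) = 0 := by
    rw [Complex.ofReal_inv]; exact eval_Dpoly_inv l m w hq1ne er1
  have er4 : (Dpoly l m w).eval ((-x₁⁻¹:ℝ):ℂ) = 0 := by
    rw [Complex.ofReal_neg, eval_Dpoly_neg]; exact er3
  have habs : ∀ y : ℝ, y ≠ 1 → -1 ≠ y → ‖((y:ℝ):ℂ)‖ ≠ 1 := by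
    intro y h1 h2 hc
    rw [Complex.norm_real, Real.norm_eq_abs] at hc
    rcases abs_eq (by norm_num : (0:ℝ) ≤ 1) |>.mp hc with h | h
    · exact h1 h
    · exact h2 h.symm
  have ha1 : ‖((x₁:ℝ):ℂ)‖ ≠ 1 := habs x₁ (by linarith) (by linarith)
  have ha2 : ‖((-x₁:ℝ):ℂ)‖ ≠ 1 := habs (-x₁) (by linarith) (by linarith)
  have ha3 : ‖((x₁⁻¹:ℝ):ℂ)‖ ≠ 1 := habs x₁⁻¹ (by linarith) (by linarith)
  have ha4 : ‖((-x₁⁻¹:ℝ):ℂ)‖ ≠ 1 := habs (-x₁⁻¹) (by linarith) (by linarith)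
  have c12 : ((x₁:ℝ):ℂ) ≠ -((x₁:ℝ):ℂ) := by
    intro hceq; have : x₁ = -x₁ := by exact_mod_cast hceq
    linarith
  have c13 : ((x₁:ℝ):ℂ) ≠ (((x₁:ℝ):ℂ))⁻¹ := by
    intro hceq; have : x₁ = x₁⁻¹ := by exact_mod_cast hceq
    linarith
  have c14 : ((x₁:ℝ):ℂ) ≠ -(((x₁:ℝ):ℂ))⁻¹ := by
    intro hceq; have : x₁ = -x₁⁻¹ := by exact_mod_cast hceq
    linarith
  have c23 : -((x₁:ℝ):ℂ) ≠ (((x₁:ℝ):ℂ))⁻¹ := by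
    intro hceq; have : -x₁ = x₁⁻¹ := by exact_mod_cast hceq
    linarith
  have c24 : -((x₁:ℝ):ℂ) ≠ -(((x₁:ℝ):ℂ))⁻¹ := by
    intro hceq; have : -x₁ = -x₁⁻¹ := by exact_mod_cast hceq
    linarith
  have c34 : (((x₁:ℝ):ℂ))⁻¹ ≠ -(((x₁:ℝ):ℂ))⁻¹ := by
    intro hceq; have : x₁⁻¹ = -x₁⁻¹ := by exact_mod_cast hceq
    linarith
  set Toff : Finset ℂ := {((x₁:ℝ):ℂ), ((-x₁:ℝ):ℂ), ((x₁⁻¹:ℝ):ℂ), ((-x₁⁻¹:ℝ):ℂ)} with hToff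
  have hToffCard : Toff.card = 4 := by
    rw [hToff]
    rw [Finset.card_insert_of_notMem (by simp [c12, c13, c14]),
      Finset.card_insert_of_notMem (by simp [c23, c24]),
      Finset.card_insert_of_notMem (by simp [c34]),
      Finset.card_singleton]
  have hToffSub : Toff ⊆ ((Dpoly l m w).roots.filter (fun p => ‖p‖ ≠ 1)).toFinset := by
    intro p hp
    rw [Multiset.mem_toFinset, Multiset.mem_filter]
    rw [hToff] at hp
    simp only [Finset.mem_insert, Finset.mem_singleton] at hp
    rcases hp with rfl | rfl | rfl | rfl
    · exact ⟨Polynomial.mem_roots'.mpr ⟨hD0, er1⟩, ha1⟩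
    · exact ⟨Polynomial.mem_roots'.mpr ⟨hD0, er2⟩, ha2⟩
    · exact ⟨Polynomial.mem_roots'.mpr ⟨hD0, er3⟩, ha3⟩
    · exact ⟨Polynomial.mem_roots'.mpr ⟨hD0, er4⟩, ha4⟩
  have hoff_ge : 4 ≤ ((Dpoly l m w).roots.filter (fun p => ‖p‖ ≠ 1)).card := by
    calc 4 = Toff.card := hToffCard.symm
    _ ≤ ((Dpoly l m w).roots.filter (fun p => ‖p‖ ≠ 1)).toFinset.card :=
        Finset.card_le_card hToffSub
    _ ≤ _ := Multiset.toFinset_card_le _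
  have hsum : ((Dpoly l m w).roots.filter (fun p => ‖p‖ = 1)).card
      + ((Dpoly l m w).roots.filter (fun p => ‖p‖ ≠ 1)).card = 2*w+4 := by
    rw [← hcard, ← Multiset.card_add]
    congr 1
    simp only [ne_eq]
    exact Multiset.filter_add_not _ _
  have hon_eq : ((Dpoly l m w).roots.filter (fun p => ‖p‖ = 1)).card = 2*w := by omega
  have hoff_eq : ((Dpoly l m w).roots.filter (fun p => ‖p‖ ≠ 1)).card = 4 := by omega
  refine ⟨hon_eq, hoff_eq, ?_⟩
  intro p hp hpabs
  have hpf : p ∈ ((Dpoly l m w).roots.filter (fun p => ‖p‖ ≠ 1)) :=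
    Multiset.mem_filter.mpr ⟨hp, hpabs⟩
  have hToffEq : Toff = ((Dpoly l m w).roots.filter (fun p => ‖p‖ ≠ 1)).toFinset := by
    apply Finset.eq_of_subset_of_card_le hToffSub
    rw [hToffCard]
    calc ((Dpoly l m w).roots.filter (fun p => ‖p‖ ≠ 1)).toFinset.card
        ≤ ((Dpoly l m w).roots.filter (fun p => ‖p‖ ≠ 1)).card :=
          Multiset.toFinset_card_le _
    _ = 4 := hoff_eq
  have hpT : p ∈ Toff := by
    rw [hToffEq]; exact Multiset.mem_toFinset.mpr hpf
  rw [hToff] at hpT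
  simp only [Finset.mem_insert, Finset.mem_singleton] at hpT
  rcases hpT with rfl | rfl | rfl | rfl <;> exact Complex.ofReal_im _

lemma Dpoly_comm (l m : ℝ) (w : ℕ) : Dpoly l m w = Dpoly m l w := by
  unfold Dpoly; ring

end DpolyAux

open scoped Classical in
theorem root_count_one_adsorbed (lam mu : ℝ)
    (h : (1 < lam ∧ 0 ≤ mu ∧ mu < 1) ∨ (0 ≤ lam ∧ lam < 1 ∧ 1 < mu)) :
    ∃ W : ℕ, ∀ w : ℕ, W ≤ w →
      ((Dpoly lam mu w).roots.filter (fun p => ‖p‖ = 1)).card = 2 * w ∧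
      ((Dpoly lam mu w).roots.filter (fun p => ‖p‖ ≠ 1)).card = 4 ∧
      ∀ p ∈ (Dpoly lam mu w).roots, ‖p‖ ≠ 1 → p.im = 0 := by
  rcases h with ⟨h1, h2, h3⟩ | ⟨h1, h2, h3⟩
  · exact DpolyAux.main_case h1 h2 h3
  · obtain ⟨W, hW⟩ := DpolyAux.main_case h3 h1 h2
    refine ⟨W, fun w hw => ?_⟩
    rw [DpolyAux.Dpoly_comm lam mu w]
    exact hW w hw
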